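/- Consequently, for the n-dimensional linear system ẋ = Ax + Lu with A having n distinct real eigenvalues, any bang-bang control of the form u(t) = ζ·sign(Lᵀλ(t)) with λ̇ = −Aᵀλ, Lᵀλ not identically zero, has at most n − 1 switches. -/

import Mathlib

open Matrix Polynomial

/-- `Annih r f` says that `f` is annihilated by the linear differential
operator `∏ (D + a)` for `a` ranging over the list `r`. -/
def Annih : List ℝ → (ℝ → ℝ) → Prop
  | [], f => ∀ t, f t = 0
  | a :: l, f => ∃ h : ℝ → ℝ, Annih l h ∧ ∀ t, HasDerivAt f (h t - a * f t) t

lemma aux_between_finite (S Z : Set ℝ) (hZ : Z.Finite)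
    (h : ∀ s1 ∈ S, ∀ s2 ∈ S, s1 < s2 → ∃ z ∈ Z, s1 < z ∧ z < s2) :
    S.Finite ∧ S.ncard ≤ Z.ncard + 1 := by
  classical
  set T : Set ℝ := {s | s ∈ S ∧ ¬ (Z ∩ Set.Ioi s).Nonempty} with hT
  set f : ℝ → ℝ := fun s => if hs : (Z ∩ Set.Ioi s).Nonempty then sInf (Z ∩ Set.Ioi s) else s
    with hf
  have hmem : ∀ s, (hs : (Z ∩ Set.Ioi s).Nonempty) → f s ∈ Z ∩ Set.Ioi s := by
    intro s hs
    have := hs.csInf_mem (hZ.inter_of_left _)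
    simpa only [hf, dif_pos hs] using this
  have hmono : ∀ s1 ∈ S, ∀ s2 ∈ S, s1 < s2 → f s1 < f s2 := by
    intro s1 h1 s2 h2 hlt
    obtain ⟨z, hz, hz1, hz2⟩ := h s1 h1 s2 h2 hlt
    have hne : (Z ∩ Set.Ioi s1).Nonempty := ⟨z, hz, hz1⟩
    have h1' : f s1 ≤ z := by
      have : sInf (Z ∩ Set.Ioi s1) ≤ z :=
        csInf_le ((hZ.inter_of_left _).bddBelow) ⟨hz, hz1⟩
      simpa only [hf, dif_pos hne] using this
    have h2' : s2 ≤ f s2 := by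
      by_cases hne2 : (Z ∩ Set.Ioi s2).Nonempty
      · exact le_of_lt (hmem s2 hne2).2
      · simp only [hf]; rw [dif_neg hne2]
    exact lt_of_le_of_lt h1' (lt_of_lt_of_le hz2 h2')
  have hinj : Set.InjOn f S := by
    intro a ha b hb hab
    rcases lt_trichotomy a b with h' | h' | h'
    · exact absurd hab (ne_of_lt (hmono a ha b hb h'))
    · exact h'
    · exact absurd hab.symm (ne_of_lt (hmono b hb a ha h'))
  have himg : f '' S ⊆ Z ∪ T := by
    rintro _ ⟨s, hs, rfl⟩
    by_cases hne : (Z ∩ Set.Ioi s).Nonempty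
    · exact Or.inl (hmem s hne).1
    · right
      have : f s = s := by simp only [hf]; rw [dif_neg hne]
      rw [this]; exact ⟨hs, hne⟩
  have hTsub : T.Subsingleton := by
    intro a ⟨ha, hna⟩ b ⟨hb, hnb⟩
    by_contra hne
    rcases lt_or_gt_of_ne hne with h' | h'
    · obtain ⟨z, hz, hz1, _⟩ := h a ha b hb h'
      exact hna ⟨z, hz, hz1⟩
    · obtain ⟨z, hz, hz1, _⟩ := h b hb a ha h'
      exact hnb ⟨z, hz, hz1⟩
  have hTfin : T.Finite := hTsub.finite
  have hZT : (Z ∪ T).Finite := hZ.union hTfin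
  have hSfin : S.Finite := Set.Finite.of_finite_image (hZT.subset himg) hinj
  refine ⟨hSfin, ?_⟩
  have h1 : S.ncard = (f '' S).ncard := (Set.ncard_image_of_injOn hinj).symm
  have h2 : (f '' S).ncard ≤ (Z ∪ T).ncard := Set.ncard_le_ncard himg hZT
  have h3 : (Z ∪ T).ncard ≤ Z.ncard + T.ncard := Set.ncard_union_le _ _
  have h4 : T.ncard ≤ 1 := by
    rcases hTsub.eq_empty_or_singleton with h | ⟨x, h⟩ <;> simp [h]
  omega

lemma annih_zeros : ∀ (r : List ℝ) (f : ℝ → ℝ), Annih r f →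
    (∀ t, f t = 0) ∨ ({t | f t = 0}.Finite ∧ {t | f t = 0}.ncard + 1 ≤ r.length) := by
  intro r
  induction r with
  | nil => exact fun f hf => Or.inl hf
  | cons a l ih =>
    intro f hf
    obtain ⟨h, hh, hder⟩ := hf
    by_cases hz : ({t | f t = 0}).Nonempty
    swap
    · right
      rw [Set.not_nonempty_iff_eq_empty] at hz
      simp [hz]
    obtain ⟨t0, ht0⟩ := hz
    set φ : ℝ → ℝ := fun t => Real.exp (a * t) * f t with hφ
    have hφd : ∀ t, HasDerivAt φ (Real.exp (a * t) * h t) t := by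
      intro t
      have h1 : HasDerivAt (fun s : ℝ => Real.exp (a * s)) (a * Real.exp (a * t)) t := by
        simpa [mul_comm, Function.comp_def] using
          (Real.hasDerivAt_exp (a * t)).comp t ((hasDerivAt_id t).const_mul a)
      have h2 := h1.fun_mul (hder t)
      refine h2.congr_deriv ?_
      ring
    rcases ih h hh with h0 | ⟨hfin, hcard⟩
    · left
      have hdiff : Differentiable ℝ φ := fun x => (hφd x).differentiableAt
      have hderiv0 : ∀ x, deriv φ x = 0 := fun x => by
        rw [(hφd x).deriv, h0 x, mul_zero]
      intro t
      have hconst : φ t = φ t0 := is_const_of_deriv_eq_zero hdiff hderiv0 t t0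
      have : φ t = 0 := by
        rw [hconst]; simp only [hφ]; rw [ht0, mul_zero]
      have he : Real.exp (a * t) ≠ 0 := (Real.exp_pos _).ne'
      exact (mul_eq_zero.1 this).resolve_left he
    · right
      have hbet : ∀ s1 ∈ {t | f t = 0}, ∀ s2 ∈ {t | f t = 0}, s1 < s2 →
          ∃ z ∈ {t | h t = 0}, s1 < z ∧ z < s2 := by
        intro s1 h1 s2 h2 hlt
        have hc : ContinuousOn φ (Set.Icc s1 s2) :=
          fun x _ => ((hφd x).continuousAt).continuousWithinAt
        have heq : φ s1 = φ s2 := by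
          simp only [hφ]
          rw [Set.mem_setOf_eq] at h1 h2
          rw [h1, h2, mul_zero, mul_zero]
        obtain ⟨c, hc1, hc2⟩ := exists_hasDerivAt_eq_zero hlt hc heq (fun x _ => hφd x)
        refine ⟨c, ?_, hc1.1, hc1.2⟩
        have he : Real.exp (a * c) ≠ 0 := (Real.exp_pos _).ne'
        exact (mul_eq_zero.1 hc2).resolve_left he
      obtain ⟨hfin', hcard'⟩ := aux_between_finite _ _ hfin hbet
      refine ⟨hfin', ?_⟩
      simp only [List.length_cons]
      omega

lemma aux_dot_deriv {n : ℕ} (v : Fin n → ℝ) (lam : ℝ → Fin n → ℝ) (w : Fin n → ℝ) (t : ℝ)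
    (hd : HasDerivAt lam w t) : HasDerivAt (fun s => v ⬝ᵥ lam s) (v ⬝ᵥ w) t := by
  have hcomp : ∀ i : Fin n, HasDerivAt (fun s => lam s i) (w i) t :=
    fun i => (hasDerivAt_pi.1 hd) i
  have : HasDerivAt (fun s => ∑ i : Fin n, v i * lam s i) (∑ i : Fin n, v i * w i) t :=
    HasDerivAt.fun_sum (fun i _ => (hcomp i).const_mul (v i))
  simpa [dotProduct] using this

lemma aux_mulVec_deriv {n : ℕ} (M : Matrix (Fin n) (Fin n) ℝ) (lam : ℝ → Fin n → ℝ)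
    (w : Fin n → ℝ) (t : ℝ) (hd : HasDerivAt lam w t) :
    HasDerivAt (fun s => M.mulVec (lam s)) (M.mulVec w) t := by
  rw [hasDerivAt_pi]
  intro i
  exact aux_dot_deriv (M i) lam w t hd

lemma aux_commute {n : ℕ} (B : Matrix (Fin n) (Fin n) ℝ) (a b : ℝ) :
    Commute (B + a • (1 : Matrix (Fin n) (Fin n) ℝ)) (B + b • 1) := by
  have h1 : Commute B (b • (1 : Matrix (Fin n) (Fin n) ℝ)) := (Commute.one_right B).smul_right b
  have h2 : Commute (a • (1 : Matrix (Fin n) (Fin n) ℝ)) B := (Commute.one_left B).smul_left a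
  have h3 : Commute (a • (1 : Matrix (Fin n) (Fin n) ℝ)) (b • 1) :=
    ((Commute.refl (1 : Matrix (Fin n) (Fin n) ℝ)).smul_left a).smul_right b
  exact ((Commute.refl B).add_right h1).add_left (h2.add_right h3)

lemma annih_of_matrix {n : ℕ} (B : Matrix (Fin n) (Fin n) ℝ) :
    ∀ (l : List ℝ) (lam : ℝ → Fin n → ℝ) (L : Fin n → ℝ),
    (∀ t, HasDerivAt lam (B.mulVec (lam t)) t) →
    (∀ t, ((l.map (fun a => B + a • (1 : Matrix (Fin n) (Fin n) ℝ))).prod).mulVec (lam t) = 0) →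
    Annih l (fun t => L ⬝ᵥ lam t) := by
  intro l
  induction l with
  | nil =>
    intro lam L _ hz
    intro t
    have : lam t = 0 := by simpa using hz t
    simp [this]
  | cons a l ih =>
    intro lam L hd hz
    set lam' : ℝ → Fin n → ℝ := fun t => (B + a • 1).mulVec (lam t) with hlam'
    refine ⟨fun t => L ⬝ᵥ lam' t, ?_, ?_⟩
    · apply ih
      · intro t
        have h1 := aux_mulVec_deriv (B + a • 1) lam (B.mulVec (lam t)) t (hd t)
        have hcB : Commute (B + a • (1 : Matrix (Fin n) (Fin n) ℝ)) B :=
          (Commute.refl B).add_left ((Commute.one_left B).smul_left a)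
        have h2 : (B + a • (1 : Matrix (Fin n) (Fin n) ℝ)).mulVec (B.mulVec (lam t))
            = B.mulVec (lam' t) := by
          rw [hlam']
          rw [Matrix.mulVec_mulVec, Matrix.mulVec_mulVec, hcB.eq]
        rw [← h2]
        exact h1
      · intro t
        have hcomm : Commute (B + a • (1 : Matrix (Fin n) (Fin n) ℝ))
            ((l.map (fun b => B + b • (1 : Matrix (Fin n) (Fin n) ℝ))).prod) := by
          apply Commute.list_prod_right
          intro x hx
          obtain ⟨b, _, rfl⟩ := List.mem_map.1 hx
          exact aux_commute B a b
        calc ((l.map (fun b => B + b • (1 : Matrix (Fin n) (Fin n) ℝ))).prod).mulVec (lam' t)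
            = (((l.map (fun b => B + b • (1 : Matrix (Fin n) (Fin n) ℝ))).prod
                * (B + a • 1))).mulVec (lam t) := by
              rw [hlam', Matrix.mulVec_mulVec]
          _ = (((a :: l).map (fun b => B + b • (1 : Matrix (Fin n) (Fin n) ℝ))).prod).mulVec
                (lam t) := by rw [← hcomm.eq, List.map_cons, List.prod_cons]
          _ = 0 := hz t
    · intro t
      have h1 := aux_dot_deriv L lam (B.mulVec (lam t)) t (hd t)
      convert h1 using 1
      rw [hlam']
      simp only []
      rw [Matrix.add_mulVec, Matrix.smul_mulVec, Matrix.one_mulVec,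
        dotProduct_add, dotProduct_smul]
      simp only [smul_eq_mul]
      ring

lemma aux_neg_prod {R : Type*} [Ring R] {α : Type*} (g : α → R) :
    ∀ l : List α, (l.map (fun x => -(g x))).prod = (-1 : R) ^ l.length * (l.map g).prod := by
  intro l
  induction l with
  | nil => simp
  | cons a l ih =>
    simp only [List.map_cons, List.prod_cons, List.length_cons, ih]
    have hc : (g a) * (-1 : R) ^ l.length = ((-1 : R) ^ l.length) * g a :=
      ((Commute.neg_one_left (g a)).pow_left l.length).symm.eq
    calc (-(g a)) * ((-1:R) ^ l.length * (l.map g).prod)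
        = -((g a * (-1:R) ^ l.length) * (l.map g).prod) := by rw [neg_mul, mul_assoc]
      _ = -(((-1:R) ^ l.length * g a) * (l.map g).prod) := by rw [hc]
      _ = -((-1:R) ^ l.length * (g a * (l.map g).prod)) := by rw [mul_assoc]
      _ = (-1:R) ^ (l.length + 1) * (g a * (l.map g).prod) := by
          rw [pow_succ, mul_assoc, neg_one_mul, mul_neg]

lemma aux_charpoly_transpose {n : ℕ} (A : Matrix (Fin n) (Fin n) ℝ) :
    Aᵀ.charpoly = A.charpoly := by
  unfold Matrix.charpoly Matrix.charmatrix
  rw [← Matrix.det_transpose]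
  congr 1
  simp [Matrix.transpose_sub, Matrix.transpose_smul, Matrix.transpose_map]

lemma aux_ch_prod {n : ℕ} (A : Matrix (Fin n) (Fin n) ℝ) (μ : Fin n → ℝ)
    (hchar : A.charpoly = ∏ i : Fin n, (X - C (μ i))) :
    ((((List.finRange n).map μ).map
        (fun a => (-Aᵀ) + a • (1 : Matrix (Fin n) (Fin n) ℝ))).prod) = 0 := by
  have h0 : (((List.finRange n).map μ).map
      (fun a => Aᵀ - a • (1 : Matrix (Fin n) (Fin n) ℝ))).prod = 0 := by
    have hCH := Matrix.aeval_self_charpoly Aᵀ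
    rw [aux_charpoly_transpose, hchar, Fin.prod_univ_def, map_list_prod (aeval Aᵀ)] at hCH
    rw [← hCH, List.map_map, List.map_map]
    congr 1
    apply List.map_congr_left
    intro i _
    simp [Algebra.algebraMap_eq_smul_one, Function.comp]
  have he : (fun a : ℝ => (-Aᵀ) + a • (1 : Matrix (Fin n) (Fin n) ℝ))
      = fun a => -(Aᵀ - a • 1) := by
    funext a
    rw [neg_sub]
    abel
  rw [he, aux_neg_prod, h0, mul_zero]

/-- If A has n distinct real eigenvalues and λ is a nonzero solution of
    λ̇ = −Aᵀλ whose switching function g(t) = Lᵀλ(t) is not identically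
    zero, then g has at most n − 1 sign changes (switches). -/
theorem stmt_16 (n : ℕ) (A : Matrix (Fin n) (Fin n) ℝ) (L : Fin n → ℝ)
    (ζ : ℝ) (hζ : 0 < ζ)
    (μ : Fin n → ℝ) (hμ : Function.Injective μ)
    (hchar : A.charpoly = ∏ i : Fin n, (X - C (μ i)))
    (lam : ℝ → Fin n → ℝ)
    (hlam : ∀ t, HasDerivAt lam (-(Aᵀ.mulVec (lam t))) t)
    (hlam0 : lam 0 ≠ 0)
    (hg : ¬ ∀ t, L ⬝ᵥ lam t = 0) :
    {t : ℝ | ∀ ε > (0:ℝ), ∃ s1 ∈ Set.Ioo (t - ε) t, ∃ s2 ∈ Set.Ioo t (t + ε),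
        (L ⬝ᵥ lam s1) * (L ⬝ᵥ lam s2) < 0}.Finite ∧
    {t : ℝ | ∀ ε > (0:ℝ), ∃ s1 ∈ Set.Ioo (t - ε) t, ∃ s2 ∈ Set.Ioo t (t + ε),
        (L ⬝ᵥ lam s1) * (L ⬝ᵥ lam s2) < 0}.ncard ≤ n - 1 := by
  set B : Matrix (Fin n) (Fin n) ℝ := -Aᵀ with hB
  set l0 : List ℝ := (List.finRange n).map μ with hl0
  have hlen : l0.length = n := by simp [hl0]
  have hlamB : ∀ t, HasDerivAt lam (B.mulVec (lam t)) t := by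
    intro t
    rw [hB, Matrix.neg_mulVec]
    exact hlam t
  have hprod0 : ((l0.map (fun a => B + a • (1 : Matrix (Fin n) (Fin n) ℝ))).prod) = 0 :=
    aux_ch_prod A μ hchar
  have hz : ∀ t, ((l0.map (fun a => B + a • (1 : Matrix (Fin n) (Fin n) ℝ))).prod).mulVec
      (lam t) = 0 := by
    intro t
    rw [hprod0, Matrix.zero_mulVec]
  have hAnnih : Annih l0 (fun t => L ⬝ᵥ lam t) := annih_of_matrix B l0 lam L hlamB hz
  rcases annih_zeros l0 _ hAnnih with h0 | ⟨hfin, hcard⟩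
  · exact absurd h0 hg
  set Z : Set ℝ := {t | L ⬝ᵥ lam t = 0} with hZdef
  set Sw : Set ℝ := {t : ℝ | ∀ ε > (0:ℝ), ∃ s1 ∈ Set.Ioo (t - ε) t, ∃ s2 ∈ Set.Ioo t (t + ε),
      (L ⬝ᵥ lam s1) * (L ⬝ᵥ lam s2) < 0} with hSw
  have hsub : Sw ⊆ Z := by
    intro t ht
    by_contra hft
    have hft' : L ⬝ᵥ lam t ≠ 0 := hft
    have hcont : ContinuousAt (fun s => L ⬝ᵥ lam s) t :=
      (aux_dot_deriv L lam _ t (hlam t)).continuousAt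
    rw [Metric.continuousAt_iff] at hcont
    obtain ⟨δ, hδ, hball⟩ := hcont (|L ⬝ᵥ lam t|) (abs_pos.2 hft')
    obtain ⟨s1, hs1, s2, hs2, hprod⟩ := ht δ hδ
    have hd1 : dist s1 t < δ := by
      rw [Real.dist_eq, abs_lt]
      constructor <;> [linarith [hs1.1]; linarith [hs1.2]]
    have hd2 : dist s2 t < δ := by
      rw [Real.dist_eq, abs_lt]
      constructor <;> [linarith [hs2.1]; linarith [hs2.2]]
    have hb1 := hball hd1
    have hb2 := hball hd2
    rw [Real.dist_eq, abs_lt] at hb1 hb2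
    rcases lt_or_gt_of_ne hft' with hneg | hpos
    · rw [abs_of_neg hneg] at hb1 hb2
      have h1 : L ⬝ᵥ lam s1 < 0 := by linarith [hb1.2]
      have h2 : L ⬝ᵥ lam s2 < 0 := by linarith [hb2.2]
      linarith [mul_pos_of_neg_of_neg h1 h2]
    · rw [abs_of_pos hpos] at hb1 hb2
      have h1 : 0 < L ⬝ᵥ lam s1 := by linarith [hb1.1]
      have h2 : 0 < L ⬝ᵥ lam s2 := by linarith [hb2.1]
      linarith [mul_pos h1 h2]
  refine ⟨hfin.subset hsub, ?_⟩
  have h5 : Sw.ncard ≤ Z.ncard := Set.ncard_le_ncard hsub hfin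
  rw [hlen] at hcard
  omega
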